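/- Let A, B ∈ GL_n(ℂ), let f and g be complete flags in ℂ^n invariant under A and B respectively, and suppose f and g are transverse (i.e. dim(f_i ∩ g_j) = max(0, i+j-n) for all i,j). Let M be an invertible matrix whose k-th column spans the one-dimensional space f_{n+1-k} ∩ g_k. Then M⁻¹AM is lower triangular and M⁻¹BM is upper triangular. -/

import Mathlib

open Matrix

/-- Key auxiliary lemma: if `W` has dimension `s.card`, contains the columns of `M`
indexed by `s`, and `A` applied to column `j` lies in `W`, then the entries of
`M⁻¹ * A * M` in column `j` outside `s` vanish. -/
private lemma key_aux {n : ℕ} (A M : Matrix (Fin n) (Fin n) ℂ) (hM : IsUnit M.det)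
    (W : Submodule ℂ (Fin n → ℂ)) (s : Finset (Fin n))
    (hdim : Module.finrank ℂ W = s.card)
    (hmem : ∀ k ∈ s, (fun i => M i k : Fin n → ℂ) ∈ W)
    (j : Fin n)
    (hAj : A.mulVec (fun i => M i j) ∈ W) :
    ∀ i : Fin n, i ∉ s → (M⁻¹ * A * M) i j = 0 := by
  set v : Fin n → (Fin n → ℂ) := fun k i => M i k with hv_def
  have hMunit : IsUnit M := (Matrix.isUnit_iff_isUnit_det M).mpr hM
  have hv : LinearIndependent ℂ v := by
    have := Matrix.linearIndependent_cols_iff_isUnit.mpr hMunit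
    exact this
  -- restricted family
  set u : s → (Fin n → ℂ) := fun k => v k with hu_def
  have hu : LinearIndependent ℂ u := hv.comp Subtype.val Subtype.val_injective
  have hle : Submodule.span ℂ (Set.range u) ≤ W := by
    rw [Submodule.span_le]
    rintro x ⟨⟨k, hk⟩, rfl⟩
    exact hmem k hk
  have hrank : Module.finrank ℂ (Submodule.span ℂ (Set.range u)) = s.card := by
    rw [finrank_span_eq_card hu, Fintype.card_coe]
  have hW : Submodule.span ℂ (Set.range u) = W :=
    Submodule.eq_of_le_of_finrank_le hle (by rw [hrank, hdim])
  rw [← hW] at hAj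
  obtain ⟨c, hc⟩ := (Submodule.mem_span_range_iff_exists_fun ℂ).mp hAj
  -- extend c by zero
  set c' : Fin n → ℂ := fun k => if h : k ∈ s then c ⟨k, h⟩ else 0 with hc'_def
  have hMc : M.mulVec c' = A.mulVec (v j) := by
    funext i
    rw [← hc]
    show ∑ k, M i k * c' k = (∑ k : s, c k • u k) i
    rw [Finset.sum_apply]
    rw [← Finset.sum_subset (Finset.subset_univ s)
      (fun k _ hk => by simp [hc'_def, hk])]
    rw [← Finset.sum_attach s (fun k => M i k * c' k)]
    refine Finset.sum_congr rfl fun k _ => ?_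
    simp [hc'_def, k.2, hu_def, hv_def, mul_comm]
  intro i hi
  have : (M⁻¹ * A * M) i j = (M⁻¹.mulVec (A.mulVec (v j))) i := by
    rw [mul_assoc]
    simp only [Matrix.mul_apply, Matrix.mulVec, dotProduct, hv_def]
  rw [this, ← hMc, Matrix.mulVec_mulVec, Matrix.nonsing_inv_mul M hM, Matrix.one_mulVec]
  simp [hc'_def, hi]

/-- If `f` and `g` are complete flags invariant under `A` and `B`
respectively, which are transverse, and the `k`-th column of the invertible matrix `M`
spans `f (n+1-k) ⊓ g k` (1-based indexing, so the flags are indexed by `0, ..., n` with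
`finrank (f i) = i`), then `M⁻¹ * A * M` is lower triangular and `M⁻¹ * B * M` is
upper triangular. -/
theorem stmt0 {n : ℕ} (hn : 0 < n)
    (A B M : Matrix (Fin n) (Fin n) ℂ)
    (hA : IsUnit A.det) (hB : IsUnit B.det) (hM : IsUnit M.det)
    (f g : ℕ → Submodule ℂ (Fin n → ℂ))
    (hf_dim : ∀ i ≤ n, Module.finrank ℂ (f i) = i)
    (hg_dim : ∀ i ≤ n, Module.finrank ℂ (g i) = i)
    (hf_mono : ∀ i j, i ≤ j → f i ≤ f j)
    (hg_mono : ∀ i j, i ≤ j → g i ≤ g j)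
    (hf_inv : ∀ i ≤ n, (f i).map A.mulVecLin ≤ f i)
    (hg_inv : ∀ i ≤ n, (g i).map B.mulVecLin ≤ g i)
    (htrans : ∀ i j, 1 ≤ i → i ≤ n → 1 ≤ j → j ≤ n →
      Module.finrank ℂ ((f i ⊓ g j : Submodule ℂ (Fin n → ℂ)) : Submodule ℂ (Fin n → ℂ)) = i + j - n)
    (hcol : ∀ k : Fin n,
      Submodule.span ℂ {(fun i => M i k : Fin n → ℂ)} = f (n - (k : ℕ)) ⊓ g ((k : ℕ) + 1)) :
    (∀ i j : Fin n, i < j → (M⁻¹ * A * M) i j = 0) ∧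
    (∀ i j : Fin n, j < i → (M⁻¹ * B * M) i j = 0) := by
  have hvk : ∀ k : Fin n, (fun i => M i k : Fin n → ℂ) ∈ f (n - (k : ℕ)) ⊓ g ((k : ℕ) + 1) := by
    intro k
    rw [← hcol k]
    exact Submodule.mem_span_singleton_self _
  constructor
  · intro i j hij
    refine key_aux A M hM (f (n - (j : ℕ))) (Finset.Ici j) ?_ ?_ j ?_ i ?_
    · rw [hf_dim _ (Nat.sub_le n j), Fin.card_Ici]
    · intro k hk
      have hjk : (j : ℕ) ≤ (k : ℕ) := Fin.le_def.mp (Finset.mem_Ici.mp hk)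
      exact hf_mono _ _ (Nat.sub_le_sub_left hjk n) ((hvk k).1
        )
    · have h1 : (fun i => M i j : Fin n → ℂ) ∈ f (n - (j : ℕ)) := (hvk j).1
      have h2 := hf_inv (n - (j : ℕ)) (Nat.sub_le n j)
      have := h2 (Submodule.mem_map_of_mem h1)
      simpa using this
    · simpa using Nat.not_le.mpr hij
  · intro i j hji
    refine key_aux B M hM (g ((j : ℕ) + 1)) (Finset.Iic j) ?_ ?_ j ?_ i ?_
    · rw [hg_dim _ j.isLt, Fin.card_Iic]
    · intro k hk
      have hkj : (k : ℕ) ≤ (j : ℕ) := Fin.le_def.mp (Finset.mem_Iic.mp hk)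
      exact hg_mono _ _ (Nat.succ_le_succ hkj) ((hvk k).2)
    · have h1 : (fun i => M i j : Fin n → ℂ) ∈ g ((j : ℕ) + 1) := (hvk j).2
      have h2 := hg_inv ((j : ℕ) + 1) j.isLt
      have := h2 (Submodule.mem_map_of_mem h1)
      simpa using this
    · simpa using Nat.not_le.mpr hji
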